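/- Let (a_k)_{k≥0} be a nondecreasing sequence in [0,1] with lim_{k→∞} a_k = 1, and fix integers s ≤ t. Define, for n ∈ ℤ, K_n := the unique k ≥ 0 with a_{k−1} ≤ U_n < a_k (convention a_{−1} := 0); K_n is a.s. finite. For integers m ≤ s′ ≤ t′ define Z[s′,t′] := max{K_n − n + s′ : n ∈ [s′,t′]} (which is ≥ 0), and set Y_{−1} := t + 1, Y_0 := s, and Y_n := Y_{n−1} − Z[Y_{n−1}, Y_{n−2} − 1] for n ≥ 1. Then ℙ-almost surely τ[s,t] = lim_{n→∞} Y_n = max{Y_n : Y_n = Y_{n+1}}, with the conventions max ∅ = −∞ and that both sides equal −∞ when Y_n → −∞. -/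

import Mathlib

open MeasureTheory Filter

/-- Regeneration time `τ[s,t]`. -/
noncomputable def tau (a : ℕ → ℝ) (u : ℤ → ℝ) (s t : ℤ) : WithBot ℤ :=
  sSup {x : WithBot ℤ | ∃ m : ℤ, x = (m : WithBot ℤ) ∧ m ≤ s ∧
    ∀ j : ℤ, m ≤ j → j ≤ t → u j < a (j - m).toNat}

/-- The coordinates are i.i.d. uniform on `[0,1)` under `μ`. -/
def IsIIDUniform (μ : Measure (ℤ → ℝ)) : Prop :=
  ProbabilityTheory.iIndepFun (m := fun _ : ℤ => (inferInstance : MeasurableSpace ℝ))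
    (fun i (u : ℤ → ℝ) => u i) μ ∧
  ∀ i : ℤ, μ.map (fun u => u i) = volume.restrict (Set.Ico (0:ℝ) 1)

/-- `K_n`: the unique `k ≥ 0` with `a_{k-1} ≤ U_n < a_k` (for a nondecreasing
sequence `a`), i.e. the smallest `k` with `U_n < a_k`; junk value if no such `k`. -/
noncomputable def KK (a : ℕ → ℝ) (u : ℤ → ℝ) (n : ℤ) : ℕ := sInf {k : ℕ | u n < a k}

/-- `Z[s',t'] := max {K_n - n + s' : n ∈ [s',t']}`. -/
noncomputable def Z (a : ℕ → ℝ) (u : ℤ → ℝ) (s' t' : ℤ) : ℤ :=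
  sSup {z : ℤ | ∃ n : ℤ, s' ≤ n ∧ n ≤ t' ∧ z = (KK a u n : ℤ) - n + s'}

/-- The pair `(Y_{n-1}, Y_n)` of the backward recursion `Y_{-1} = t+1`, `Y_0 = s`,
`Y_n = Y_{n-1} - Z[Y_{n-1}, Y_{n-2} - 1]`. -/
noncomputable def Ypair (a : ℕ → ℝ) (u : ℤ → ℝ) (s t : ℤ) : ℕ → ℤ × ℤ
  | 0 => (t + 1, s)
  | n + 1 =>
    ((Ypair a u s t n).2,
      (Ypair a u s t n).2 - Z a u (Ypair a u s t n).2 ((Ypair a u s t n).1 - 1))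

/-- `Y_n` of the backward recursion. -/
noncomputable def Y (a : ℕ → ℝ) (u : ℤ → ℝ) (s t : ℤ) (n : ℕ) : ℤ :=
  (Ypair a u s t n).2

section aux
variable {a : ℕ → ℝ} {u : ℤ → ℝ}

lemma K_lt {n : ℤ} (hK : {k : ℕ | u n < a k}.Nonempty) : u n < a (KK a u n) :=
  Nat.sInf_mem hK

lemma K_le {n : ℤ} {k : ℕ} (h : u n < a k) : KK a u n ≤ k := Nat.sInf_le h

lemma lt_iff_K_le (hmono : Monotone a) {n : ℤ} (hK : {k : ℕ | u n < a k}.Nonempty)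
    {k : ℕ} : u n < a k ↔ KK a u n ≤ k :=
  ⟨K_le, fun h => lt_of_lt_of_le (K_lt hK) (hmono h)⟩

lemma Zset_eq (s' t' : ℤ) :
    {z : ℤ | ∃ n : ℤ, s' ≤ n ∧ n ≤ t' ∧ z = (KK a u n : ℤ) - n + s'} =
      (fun n : ℤ => (KK a u n : ℤ) - n + s') '' Set.Icc s' t' := by
  ext z
  simp only [Set.mem_setOf_eq, Set.mem_image, Set.mem_Icc]
  constructor
  · rintro ⟨n, h1, h2, rfl⟩; exact ⟨n, ⟨h1, h2⟩, rfl⟩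
  · rintro ⟨n, ⟨h1, h2⟩, rfl⟩; exact ⟨n, h1, h2, rfl⟩

lemma Zset_bdd (s' t' : ℤ) :
    BddAbove {z : ℤ | ∃ n : ℤ, s' ≤ n ∧ n ≤ t' ∧ z = (KK a u n : ℤ) - n + s'} := by
  rw [Zset_eq]
  exact ((Set.finite_Icc s' t').image _).bddAbove

lemma Z_ge {s' t' n : ℤ} (h1 : s' ≤ n) (h2 : n ≤ t') :
    (KK a u n : ℤ) - n + s' ≤ Z a u s' t' :=
  le_csSup (Zset_bdd s' t') ⟨n, h1, h2, rfl⟩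

lemma Z_le {s' t' b : ℤ} (hne : s' ≤ t')
    (h : ∀ n : ℤ, s' ≤ n → n ≤ t' → (KK a u n : ℤ) - n + s' ≤ b) :
    Z a u s' t' ≤ b := by
  refine csSup_le ⟨(KK a u s' : ℤ) - s' + s', s', le_refl _, hne, rfl⟩ ?_
  rintro z ⟨n, h1, h2, rfl⟩
  exact h n h1 h2

lemma Z_nonneg {s' t' : ℤ} (hne : s' ≤ t') : 0 ≤ Z a u s' t' := by
  have := Z_ge (a := a) (u := u) (le_refl s') hne
  omega

lemma Z_empty {s' t' : ℤ} (h : t' < s') : Z a u s' t' = 0 := by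
  have : {z : ℤ | ∃ n : ℤ, s' ≤ n ∧ n ≤ t' ∧ z = (KK a u n : ℤ) - n + s'} = ∅ := by
    ext z; simp only [Set.mem_setOf_eq, Set.mem_empty_iff_false, iff_false]
    rintro ⟨n, h1, h2, -⟩; omega
  rw [Z, this, Int.csSup_empty]

end aux

section Ylem
variable {a : ℕ → ℝ} {u : ℤ → ℝ} {s t : ℤ}

lemma Y_zero : Y a u s t 0 = s := rfl

lemma prev_zero : (Ypair a u s t 0).1 = t + 1 := rfl

lemma prev_succ (n : ℕ) : (Ypair a u s t (n + 1)).1 = Y a u s t n := rfl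

lemma Y_rec (n : ℕ) :
    Y a u s t (n + 1) = Y a u s t n - Z a u (Y a u s t n) ((Ypair a u s t n).1 - 1) := rfl

lemma Y_step (hst : s ≤ t) :
    ∀ n, Y a u s t (n + 1) ≤ Y a u s t n ∧ Y a u s t n ≤ (Ypair a u s t n).1 := by
  intro n
  induction n with
  | zero =>
    refine ⟨?_, by rw [Y_zero, prev_zero]; omega⟩
    have h0 : (0:ℤ) ≤ Z a u s t := Z_nonneg hst
    have : Y a u s t (0 + 1) = s - Z a u s t := by
      rw [Y_rec, Y_zero, prev_zero]; ring_nf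
    have h00 : Y a u s t 0 = s := Y_zero
    omega
  | succ n ih =>
    have hrec := Y_rec (a := a) (u := u) (s := s) (t := t) (n + 1)
    rw [prev_succ] at hrec
    refine ⟨?_, by rw [prev_succ]; exact ih.1⟩
    rcases le_or_gt (Y a u s t (n + 1)) (Y a u s t n - 1) with h | h
    · have := Z_nonneg (a := a) (u := u) h
      omega
    · have heq : Y a u s t n - 1 < Y a u s t (n + 1) := h
      have := Z_empty (a := a) (u := u) heq
      omega

lemma Y_antitone (hst : s ≤ t) : Antitone (Y a u s t) :=
  antitone_nat_of_succ_le fun n => (Y_step hst n).1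

lemma Y_le_s (hst : s ≤ t) (n : ℕ) : Y a u s t n ≤ s :=
  (Y_antitone hst (Nat.zero_le n)).trans (le_of_eq Y_zero)

lemma prev_le (hst : s ≤ t) (n : ℕ) : (Ypair a u s t n).1 - 1 ≤ t := by
  cases n with
  | zero => rw [prev_zero]; omega
  | succ n => rw [prev_succ]; have := Y_le_s (a := a) (u := u) hst n; omega

/-- The key invariant: everything in `[Y n, t]` has been checked up to level `Y (n+1)`. -/
lemma Y_inv (hst : s ≤ t) :
    ∀ n, ∀ j : ℤ, Y a u s t n ≤ j → j ≤ t → Y a u s t (n + 1) ≤ j - (KK a u j : ℤ) := by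
  intro n
  induction n with
  | zero =>
    intro j h1 h2
    rw [Y_zero] at h1
    have hz : (KK a u j : ℤ) - j + s ≤ Z a u s t := Z_ge h1 h2
    have : Y a u s t (0 + 1) = s - Z a u s t := by rw [Y_rec, Y_zero, prev_zero]; ring_nf
    omega
  | succ n ih =>
    intro j h1 h2
    rcases le_or_gt (Y a u s t n) j with h | h
    · have := ih j h h2
      have := (Y_step (a := a) (u := u) hst (n + 1)).1
      omega
    · have hrec := Y_rec (a := a) (u := u) (s := s) (t := t) (n + 1)
      rw [prev_succ] at hrec
      have hz : (KK a u j : ℤ) - j + Y a u s t (n + 1) ≤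
          Z a u (Y a u s t (n + 1)) (Y a u s t n - 1) := Z_ge h1 (by omega)
      omega

end Ylem

section cand
variable {a : ℕ → ℝ} {u : ℤ → ℝ} {s t : ℤ}

/-- A candidate regeneration point. -/
def Cand (a : ℕ → ℝ) (u : ℤ → ℝ) (s t m : ℤ) : Prop :=
  m ≤ s ∧ ∀ j : ℤ, m ≤ j → j ≤ t → u j < a (j - m).toNat

lemma cand_le_Y (hst : s ≤ t) {m : ℤ} (hc : Cand a u s t m) : ∀ n, m ≤ Y a u s t n := by
  intro n
  induction n with
  | zero => rw [Y_zero]; exact hc.1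
  | succ n ih =>
    have hrec := Y_rec (a := a) (u := u) (s := s) (t := t) n
    have hZ : Z a u (Y a u s t n) ((Ypair a u s t n).1 - 1) ≤ Y a u s t n - m := by
      rcases le_or_gt (Y a u s t n) ((Ypair a u s t n).1 - 1) with h | h
      · refine Z_le h ?_
        intro j h1 h2
        have hjt : j ≤ t := h2.trans (prev_le hst n)
        have hmj : m ≤ j := ih.trans h1
        have hK : KK a u j ≤ (j - m).toNat := K_le (hc.2 j hmj hjt)
        have : ((j - m).toNat : ℤ) = j - m := Int.toNat_of_nonneg (by omega)
        omega
      · rw [Z_empty h]; omega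
    omega

lemma stab_cand (hmono : Monotone a) (hst : s ≤ t)
    (hKne : ∀ n : ℤ, {k : ℕ | u n < a k}.Nonempty) {N : ℕ}
    (hN : Y a u s t N = Y a u s t (N + 1)) : Cand a u s t (Y a u s t N) := by
  refine ⟨Y_le_s hst N, fun j h1 h2 => ?_⟩
  have h3 := Y_inv hst N j h1 h2
  rw [← hN] at h3
  have h4 : KK a u j ≤ (j - Y a u s t N).toNat := by
    have : ((j - Y a u s t N).toNat : ℤ) = j - Y a u s t N := Int.toNat_of_nonneg (by omega)
    omega
  exact lt_of_lt_of_le (K_lt (hKne j)) (hmono h4)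

lemma stab_next {n : ℕ} (h : Y a u s t n = Y a u s t (n + 1)) :
    Y a u s t (n + 1) = Y a u s t (n + 1 + 1) := by
  have hrec := Y_rec (a := a) (u := u) (s := s) (t := t) (n + 1)
  rw [prev_succ] at hrec
  rw [← h] at hrec
  rw [Z_empty (by omega)] at hrec
  omega

lemma stab_forever {n : ℕ} (h : Y a u s t n = Y a u s t (n + 1)) :
    ∀ k, Y a u s t (n + k) = Y a u s t n := by
  have key : ∀ k, Y a u s t (n + k) = Y a u s t n ∧ Y a u s t (n + k + 1) = Y a u s t n := by
    intro k
    induction k with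
    | zero => exact ⟨rfl, h.symm⟩
    | succ k ih =>
      refine ⟨ih.2, ?_⟩
      have h2 := stab_next (n := n + k) (by rw [ih.1, ih.2])
      show Y a u s t (n + k + 1 + 1) = Y a u s t n
      rw [← h2, ih.2]
  exact fun k => (key k).1
end cand

section core
variable {a : ℕ → ℝ} {u : ℤ → ℝ} {s t : ℤ}

lemma core (hmono : Monotone a) (hst : s ≤ t)
    (hKne : ∀ n : ℤ, {k : ℕ | u n < a k}.Nonempty) :
    tau a u s t =
        sSup {x : WithBot ℤ | ∃ n : ℕ, Y a u s t n = Y a u s t (n + 1) ∧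
          x = (Y a u s t n : WithBot ℤ)} ∧
      (∀ m : ℤ, tau a u s t = (m : WithBot ℤ) → ∀ᶠ n in atTop, Y a u s t n = m) ∧
      (tau a u s t = ⊥ → Tendsto (Y a u s t) atTop atBot) := by
  by_cases h : ∃ N : ℕ, Y a u s t N = Y a u s t (N + 1)
  · obtain ⟨N, hN⟩ := h
    have hcand := stab_cand hmono hst hKne hN
    have hgt : IsGreatest {x : WithBot ℤ | ∃ m : ℤ, x = (m : WithBot ℤ) ∧ m ≤ s ∧
        ∀ j : ℤ, m ≤ j → j ≤ t → u j < a (j - m).toNat} ((Y a u s t N : WithBot ℤ)) := by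
      constructor
      · exact ⟨Y a u s t N, rfl, hcand.1, hcand.2⟩
      · rintro x ⟨m, rfl, h1, h2⟩
        exact_mod_cast cand_le_Y hst ⟨h1, h2⟩ N
    have htau : tau a u s t = (Y a u s t N : WithBot ℤ) := hgt.csSup_eq
    have hgt2 : IsGreatest {x : WithBot ℤ | ∃ n : ℕ, Y a u s t n = Y a u s t (n + 1) ∧
        x = (Y a u s t n : WithBot ℤ)} ((Y a u s t N : WithBot ℤ)) := by
      constructor
      · exact ⟨N, hN, rfl⟩
      · rintro x ⟨n, hn, rfl⟩
        exact_mod_cast cand_le_Y hst (stab_cand hmono hst hKne hn) N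
    refine ⟨by rw [htau, hgt2.csSup_eq], ?_, ?_⟩
    · intro m hm
      rw [htau] at hm
      have hYm : Y a u s t N = m := by exact_mod_cast hm
      refine eventually_atTop.2 ⟨N, fun n hn => ?_⟩
      obtain ⟨k, rfl⟩ := Nat.exists_eq_add_of_le hn
      rw [stab_forever hN k, hYm]
    · intro hbot; rw [htau] at hbot; exact absurd hbot (WithBot.coe_ne_bot)
  · push_neg at h
    have hstrict : ∀ n, Y a u s t (n + 1) ≤ Y a u s t n - 1 := fun n => by
      have h1 := (Y_step (a := a) (u := u) hst n).1; have h2 := h n; omega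
    have hbound : ∀ n : ℕ, Y a u s t n ≤ s - n := by
      intro n; induction n with
      | zero => simp [Y_zero]
      | succ n ih => have := hstrict n; push_cast; push_cast at ih; omega
    have hSempty : {x : WithBot ℤ | ∃ m : ℤ, x = (m : WithBot ℤ) ∧ m ≤ s ∧
        ∀ j : ℤ, m ≤ j → j ≤ t → u j < a (j - m).toNat} = ∅ := by
      rw [Set.eq_empty_iff_forall_notMem]
      rintro x ⟨m, rfl, h1, h2⟩
      have hc := cand_le_Y hst ⟨h1, h2⟩ ((s - m + 1).toNat)
      have hb := hbound ((s - m + 1).toNat)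
      have h3 : s - m + 1 ≤ (((s - m + 1).toNat : ℕ) : ℤ) := Int.self_le_toNat _
      omega
    have hTempty : {x : WithBot ℤ | ∃ n : ℕ, Y a u s t n = Y a u s t (n + 1) ∧
        x = (Y a u s t n : WithBot ℤ)} = ∅ := by
      rw [Set.eq_empty_iff_forall_notMem]; rintro x ⟨n, hn, rfl⟩; exact h n hn
    have htau : tau a u s t = ⊥ := by rw [tau, hSempty, WithBot.sSup_empty]
    refine ⟨by rw [htau, hTempty, WithBot.sSup_empty], ?_, ?_⟩
    · intro m hm; rw [htau] at hm; exact absurd hm.symm (WithBot.coe_ne_bot)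
    · intro _
      refine tendsto_atBot.2 fun b => eventually_atTop.2 ⟨(s - b).toNat, fun n hn => ?_⟩
      have h1 := hbound n
      have h2 : s - b ≤ (((s - b).toNat : ℕ) : ℤ) := Int.self_le_toNat _
      have h3 : (((s - b).toNat : ℕ) : ℤ) ≤ (n : ℤ) := by exact_mod_cast hn
      omega

end core

/-- `ℙ`-a.s. the `K_n` are finite (well defined) and
`τ[s,t] = lim_n Y_n = max {Y_n : Y_n = Y_{n+1}}`, with `max ∅ = -∞` and all three
expressions equal to `-∞` when `Y_n → -∞`. -/
theorem stmt19 (a : ℕ → ℝ) (ha : ∀ k, a k ∈ Set.Icc (0:ℝ) 1) (hmono : Monotone a)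
    (hlim : Tendsto a atTop (nhds 1))
    (μ : Measure (ℤ → ℝ)) [IsProbabilityMeasure μ] (hiid : IsIIDUniform μ)
    (s t : ℤ) (hst : s ≤ t) :
    ∀ᵐ u ∂μ,
      (∀ n : ℤ, {k : ℕ | u n < a k}.Nonempty) ∧
      tau a u s t =
        sSup {x : WithBot ℤ | ∃ n : ℕ, Y a u s t n = Y a u s t (n + 1) ∧
          x = (Y a u s t n : WithBot ℤ)} ∧
      (∀ m : ℤ, tau a u s t = (m : WithBot ℤ) → ∀ᶠ n in atTop, Y a u s t n = m) ∧
      (tau a u s t = ⊥ → Tendsto (Y a u s t) atTop atBot) := by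
  have hae : ∀ᵐ u ∂μ, ∀ i : ℤ, u i ∈ Set.Ico (0:ℝ) 1 := by
    rw [ae_all_iff]
    intro i
    rw [ae_iff]
    have hmeas : Measurable (fun u : ℤ → ℝ => u i) := measurable_pi_apply i
    have : {u : ℤ → ℝ | ¬ u i ∈ Set.Ico (0:ℝ) 1} =
        (fun u : ℤ → ℝ => u i) ⁻¹' (Set.Ico (0:ℝ) 1)ᶜ := rfl
    rw [this, ← Measure.map_apply hmeas measurableSet_Ico.compl, hiid.2 i,
      Measure.restrict_apply measurableSet_Ico.compl, Set.compl_inter_self, measure_empty]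
  filter_upwards [hae] with u hu
  have hKne : ∀ n : ℤ, {k : ℕ | u n < a k}.Nonempty := by
    intro n
    exact (hlim.eventually (eventually_gt_nhds (hu n).2)).exists
  exact ⟨hKne, core hmono hst hKne⟩
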